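/- Let F = f + g where ∇f is coordinate-wise L-Lipschitz, g(x) = Σ_i g_i(x_i) is separable with each g_i convex, F attains its minimum F*, and F satisfies the proximal-PL inequality (1/2)D_g(x, L) ≥ μ(F(x) − F*). Then randomized proximal coordinate descent, which picks i_k uniformly at random and sets x_{k+1} = x_k + t* e_{i_k} with t* = argmin_t [t ∇_{i_k} f(x_k) + (L/2)t² + g_{i_k}((x_k)_{i_k} + t) − g_{i_k}((x_k)_{i_k})], satisfies E[F(x_k) − F*] ≤ (1 − μ/(dL))^k (F(x_0) − F*). -/

import Mathlib

open RealInnerProductSpace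

/-- The quantity `D_g(x, λ)` from the proximal-PL inequality. -/
noncomputable def Dg {d : ℕ} (f g : EuclideanSpace ℝ (Fin d) → ℝ)
    (x : EuclideanSpace ℝ (Fin d)) (lam : ℝ) : ℝ :=
  -2 * lam * ⨅ y : EuclideanSpace ℝ (Fin d),
    (⟪gradient f x, y - x⟫ + lam / 2 * ‖y - x‖ ^ 2 + g y - g x)

theorem randomized_proximal_coordinate_descent_proxPL
    {d : ℕ} (hd : 0 < d)
    (f g : EuclideanSpace ℝ (Fin d) → ℝ) (gi : Fin d → ℝ → ℝ)
    (L μ Fstar : ℝ) (hL : 0 < L) (hμ : 0 < μ)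
    (hdiff : Differentiable ℝ f)
    (hgsep : ∀ x, g x = ∑ i, gi i (x i))
    (hgiconv : ∀ i, ConvexOn ℝ Set.univ (gi i))
    (hlip : ∀ (x : EuclideanSpace ℝ (Fin d)) (i : Fin d) (t : ℝ),
      (f (x + t • EuclideanSpace.single i (1 : ℝ)) + g (x + t • EuclideanSpace.single i (1 : ℝ)))
          - (f x + g x)
        ≤ t * gradient f x i + L / 2 * t ^ 2 + gi i (x i + t) - gi i (x i))
    (hmin : ∃ z, f z + g z = Fstar ∧ ∀ y, Fstar ≤ f y + g y)
    (hproxPL : ∀ x, μ * (f x + g x - Fstar) ≤ 1 / 2 * Dg f g x L)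
    (x0 : EuclideanSpace ℝ (Fin d))
    (X : ∀ k : ℕ, (Fin k → Fin d) → EuclideanSpace ℝ (Fin d))
    (hX0 : ∀ ω, X 0 ω = x0)
    (hXs : ∀ (k : ℕ) (ω : Fin (k + 1) → Fin d),
      ∃ t : ℝ,
        IsMinOn (fun s : ℝ =>
            s * gradient f (X k (ω ∘ Fin.castSucc)) (ω (Fin.last k)) + L / 2 * s ^ 2
              + gi (ω (Fin.last k)) ((X k (ω ∘ Fin.castSucc)) (ω (Fin.last k)) + s)
              - gi (ω (Fin.last k)) ((X k (ω ∘ Fin.castSucc)) (ω (Fin.last k))))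
          Set.univ t
        ∧ X (k + 1) ω = X k (ω ∘ Fin.castSucc)
            + t • EuclideanSpace.single (ω (Fin.last k)) (1 : ℝ)) :
    ∀ k : ℕ,
      (∑ ω : Fin k → Fin d, (f (X k ω) + g (X k ω) - Fstar)) / (d : ℝ) ^ k
        ≤ (1 - μ / (d * L)) ^ k * (f x0 + g x0 - Fstar) := by
  obtain ⟨z, hz1, hz2⟩ := hmin
  have hd' : (0 : ℝ) < d := by exact_mod_cast hd
  set c : ℝ := 1 - μ / (d * L) with hc
  set A : ℝ := f x0 + g x0 - Fstar with hA
  -- the key per-step estimate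
  have step : ∀ (k : ℕ) (ω0 : Fin k → Fin d),
      ∑ i : Fin d,
          (f (X (k + 1) (Fin.snoc ω0 i)) + g (X (k + 1) (Fin.snoc ω0 i)) - Fstar)
        ≤ (d - μ / L) * (f (X k ω0) + g (X k ω0) - Fstar) := by
    intro k ω0
    have hcomp : ∀ i : Fin d, (Fin.snoc ω0 i : Fin (k + 1) → Fin d) ∘ Fin.castSucc = ω0 := by
      intro i; funext j; simp [Function.comp, Fin.snoc_castSucc]
    have hlast : ∀ i : Fin d, (Fin.snoc ω0 i : Fin (k + 1) → Fin d) (Fin.last k) = i := by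
      intro i; simp
    choose t ht hXt using fun i : Fin d => hXs k (Fin.snoc ω0 i)
    simp only [hcomp, hlast] at ht hXt
    set x := X k ω0 with hxdef
    set m : Fin d → ℝ := fun i =>
      t i * gradient f x i + L / 2 * (t i) ^ 2 + gi i (x i + t i) - gi i (x i) with hm
    have hB : ∀ (i : Fin d) (s : ℝ),
        m i ≤ s * gradient f x i + L / 2 * s ^ 2 + gi i (x i + s) - gi i (x i) := by
      intro i s
      have h := (isMinOn_iff.mp (ht i)) s (Set.mem_univ s)
      simpa [hm, Fin.snoc_last] using h
    have hAi : ∀ i : Fin d,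
        f (X (k + 1) (Fin.snoc ω0 i)) + g (X (k + 1) (Fin.snoc ω0 i)) - (f x + g x) ≤ m i := by
      intro i
      rw [hXt i]
      exact hlip x i (t i)
    -- the sum of the coordinatewise minimal decreases is below the full proximal decrease
    have hbdd : ∀ y : EuclideanSpace ℝ (Fin d),
        ∑ i, m i ≤ ⟪gradient f x, y - x⟫ + L / 2 * ‖y - x‖ ^ 2 + g y - g x := by
      intro y
      have h1 : ⟪gradient f x, y - x⟫ = ∑ i, gradient f x i * (y i - x i) := by
        rw [PiLp.inner_apply]
        simp [RCLike.inner_apply]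
        exact Finset.sum_congr rfl fun i _ => mul_comm _ _
      have h2 : ‖y - x‖ ^ 2 = ∑ i, (y i - x i) ^ 2 := by
        rw [← real_inner_self_eq_norm_sq, PiLp.inner_apply]
        simp [RCLike.inner_apply, sq]
      have hexp : ⟪gradient f x, y - x⟫ + L / 2 * ‖y - x‖ ^ 2 + g y - g x
          = ∑ i, ((y i - x i) * gradient f x i + L / 2 * (y i - x i) ^ 2
              + gi i (x i + (y i - x i)) - gi i (x i)) := by
        rw [h1, h2, hgsep y, hgsep x, Finset.mul_sum, ← Finset.sum_add_distrib,
          ← Finset.sum_add_distrib, ← Finset.sum_sub_distrib]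
        refine Finset.sum_congr rfl fun i _ => ?_
        rw [show x i + (y i - x i) = y i from by ring]
        ring
      rw [hexp]
      exact Finset.sum_le_sum fun i _ => hB i (y i - x i)
    have hinf : ∑ i, m i ≤ ⨅ y : EuclideanSpace ℝ (Fin d),
        (⟪gradient f x, y - x⟫ + L / 2 * ‖y - x‖ ^ 2 + g y - g x) := le_ciInf hbdd
    have hDg : (1 : ℝ) / 2 * Dg f g x L
        = -L * ⨅ y : EuclideanSpace ℝ (Fin d),
            (⟪gradient f x, y - x⟫ + L / 2 * ‖y - x‖ ^ 2 + g y - g x) := by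
      rw [Dg]; ring
    have hPL := hproxPL x
    rw [hDg] at hPL
    have hmsum : ∑ i, m i ≤ -(μ * (f x + g x - Fstar)) / L := by
      have h3 : -L * (∑ i, m i) ≥ -L * ⨅ y : EuclideanSpace ℝ (Fin d),
          (⟪gradient f x, y - x⟫ + L / 2 * ‖y - x‖ ^ 2 + g y - g x) := by
        apply mul_le_mul_of_nonpos_left hinf
        linarith
      have h4 : μ * (f x + g x - Fstar) ≤ -L * (∑ i, m i) := le_trans hPL h3
      rw [le_div_iff₀ hL]
      linarith
    calc ∑ i : Fin d, (f (X (k + 1) (Fin.snoc ω0 i)) + g (X (k + 1) (Fin.snoc ω0 i)) - Fstar)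
        ≤ ∑ i : Fin d, (m i + (f x + g x - Fstar)) := by
          refine Finset.sum_le_sum fun i _ => ?_
          have := hAi i; linarith
      _ = (∑ i, m i) + d * (f x + g x - Fstar) := by
          rw [Finset.sum_add_distrib, Finset.sum_const]
          simp [mul_comm]
      _ ≤ -(μ * (f x + g x - Fstar)) / L + d * (f x + g x - Fstar) := by linarith
      _ = (d - μ / L) * (f x + g x - Fstar) := by ring
  -- summed step estimate
  have hstep_sum : ∀ k : ℕ,
      (∑ ω : Fin (k + 1) → Fin d, (f (X (k + 1) ω) + g (X (k + 1) ω) - Fstar))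
        ≤ (d - μ / L) * ∑ ω : Fin k → Fin d, (f (X k ω) + g (X k ω) - Fstar) := by
    intro k
    have he : (∑ ω : Fin (k + 1) → Fin d, (f (X (k + 1) ω) + g (X (k + 1) ω) - Fstar))
        = ∑ p : Fin d × (Fin k → Fin d),
            (f (X (k + 1) (Fin.snoc p.2 p.1)) + g (X (k + 1) (Fin.snoc p.2 p.1)) - Fstar) := by
      refine (Fintype.sum_equiv (Fin.snocEquiv (fun _ => Fin d))
        _ (fun ω => f (X (k + 1) ω) + g (X (k + 1) ω) - Fstar) fun p => rfl).symm
    rw [he, Fintype.sum_prod_type, Finset.sum_comm, Finset.mul_sum]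
    exact Finset.sum_le_sum fun ω0 _ => step k ω0
  have hS0 : (∑ ω : Fin 0 → Fin d, (f (X 0 ω) + g (X 0 ω) - Fstar)) = A := by
    rw [Fintype.sum_unique, hX0]
  have hSnonneg : ∀ k : ℕ, 0 ≤ ∑ ω : Fin k → Fin d, (f (X k ω) + g (X k ω) - Fstar) := by
    intro k
    refine Finset.sum_nonneg fun ω _ => ?_
    have := hz2 (X k ω); linarith
  have hdc : (d : ℝ) - μ / L = d * c := by
    rw [hc]; field_simp
  rcases le_or_gt 0 c with hcpos | hcneg
  · intro k
    induction k with
    | zero => rw [pow_zero, pow_zero, hS0, div_one, one_mul]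
    | succ k ih =>
      have h1 := hstep_sum k
      rw [hdc] at h1
      have h2 : (∑ ω : Fin (k + 1) → Fin d, (f (X (k + 1) ω) + g (X (k + 1) ω) - Fstar))
            / (d : ℝ) ^ (k + 1)
          ≤ ((d : ℝ) * c * ∑ ω : Fin k → Fin d, (f (X k ω) + g (X k ω) - Fstar))
            / (d : ℝ) ^ (k + 1) := by
        apply div_le_div_of_nonneg_right h1
        positivity
      refine h2.trans ?_
      have h3 : ((d : ℝ) * c * ∑ ω : Fin k → Fin d, (f (X k ω) + g (X k ω) - Fstar))
            / (d : ℝ) ^ (k + 1)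
          = c * ((∑ ω : Fin k → Fin d, (f (X k ω) + g (X k ω) - Fstar)) / (d : ℝ) ^ k) := by
        rw [pow_succ]
        field_simp
      rw [h3, pow_succ, mul_comm (c ^ k) c, mul_assoc]
      exact mul_le_mul_of_nonneg_left ih hcpos
  · -- degenerate case: the contraction factor is negative, forcing A = 0
    have hA0 : A = 0 := by
      have h1 := hstep_sum 0
      rw [hS0, hdc] at h1
      have h2 := hSnonneg 1
      have hAnn : 0 ≤ A := by have := hz2 x0; rw [hA]; linarith
      by_contra h
      have hApos : 0 < A := lt_of_le_of_ne hAnn (Ne.symm h)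
      have hneg : (d : ℝ) * c * A < 0 :=
        mul_neg_of_neg_of_pos (mul_neg_of_pos_of_neg hd' hcneg) hApos
      linarith [hSnonneg (0 + 1)]
    have hzero : ∀ k : ℕ, (∑ ω : Fin k → Fin d, (f (X k ω) + g (X k ω) - Fstar)) = 0 := by
      intro k
      induction k with
      | zero => rw [hS0, hA0]
      | succ k ih =>
        have h1 := hstep_sum k
        rw [ih, mul_zero] at h1
        exact le_antisymm h1 (hSnonneg (k + 1))
    intro k
    rw [hzero k, hA0, mul_zero, zero_div]
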